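/- Let f be continuous and strictly positive and let τ : [0,r) → [0,∞) be C¹ and satisfy τ'(t) = 1 - f(A(t))/f(A(t-τ(t))) with τ(0) = τ₀, where A is continuous. If τ₀ > 0 then τ(t) > 0 for all t ∈ [0, r); if τ₀ = 0 then τ(t) = 0 for all t ∈ [0, r). -/

import Mathlib

open Set

/-- Sign preservation for the delay: positive initial delay stays positive,
zero initial delay stays zero. -/
theorem stmt3 (f A τ : ℝ → ℝ) (r τ₀ : ℝ) (hr : 0 < r)
    (hf : Continuous f) (hfpos : ∀ x, 0 < f x)
    (hA : ContinuousOn A (Iio r))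
    (hode : ∀ t ∈ Ico (0:ℝ) r, HasDerivAt τ (1 - f (A t) / f (A (t - τ t))) t)
    (hτcont : ContinuousOn (fun t => 1 - f (A t) / f (A (t - τ t))) (Ico 0 r))
    (hτnonneg : ∀ t ∈ Ico (0:ℝ) r, 0 ≤ τ t)
    (hτ0 : τ 0 = τ₀) :
    (0 < τ₀ → ∀ t ∈ Ico (0:ℝ) r, 0 < τ t) ∧
      (τ₀ = 0 → ∀ t ∈ Ico (0:ℝ) r, τ t = 0) := by
  set g : ℝ → ℝ := fun s => f (A s) with hg
  have hgcont : ContinuousOn g (Iio r) := hf.comp_continuousOn hA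
  have hgat : ∀ x, x < r → ContinuousAt g x := fun x hx =>
    hgcont.continuousAt (Iio_mem_nhds hx)
  have hgint : ∀ a b : ℝ, a < r → b < r → IntervalIntegrable g MeasureTheory.volume a b := by
    intro a b ha hb
    apply (hgcont.mono ?_).intervalIntegrable
    intro x hx
    exact lt_of_le_of_lt hx.2 (max_lt ha hb)
  set F : ℝ → ℝ := fun x => ∫ s in (0:ℝ)..x, g s with hF
  have hFderiv : ∀ x, x < r → HasDerivAt F (g x) x := by
    intro x hx
    exact intervalIntegral.integral_hasDerivAt_right (hgint 0 x hr hx)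
      (hgcont.stronglyMeasurableAtFilter isOpen_Iio x hx) (hgat x hx)
  have hF0 : F 0 = 0 := intervalIntegral.integral_same
  have hFlt : ∀ a b : ℝ, a < r → b < r → a < b → F a < F b := by
    intro a b ha hb hab
    have h1 : F a + ∫ s in a..b, g s = F b :=
      intervalIntegral.integral_add_adjacent_intervals (hgint 0 a hr ha) (hgint a b ha hb)
    have h2 : 0 < ∫ s in a..b, g s :=
      intervalIntegral.intervalIntegral_pos_of_pos_on (hgint a b ha hb)
        (fun x _ => hfpos _) hab
    linarith
  -- the conserved quantity
  have hhderiv : ∀ t ∈ Ico (0:ℝ) r, HasDerivAt (fun t => F (t - τ t) - F t) 0 t := by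
    intro t ht
    have hσlt : t - τ t < r := lt_of_le_of_lt (by linarith [hτnonneg t ht]) ht.2
    have h1 : HasDerivAt (fun t => t - τ t)
        (1 - (1 - f (A t) / f (A (t - τ t)))) t := (hasDerivAt_id t).sub (hode t ht)
    have h3 : HasDerivAt (fun t => F (t - τ t)) (g (t - τ t) * (1 - (1 - f (A t) / f (A (t - τ t))))) t :=
      by
        have e := hFderiv (t - τ t) hσlt
        exact HasDerivAt.comp (𝕜 := ℝ) t e h1
    have h2 : HasDerivAt (fun t => F (t - τ t) - F t)
        (g (t - τ t) * (1 - (1 - f (A t) / f (A (t - τ t)))) - g t) t := by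
      have e := hFderiv t ht.2
      exact HasDerivAt.sub h3 e
    convert h2 using 1
    have hne := (hfpos (A (t - τ t))).ne'
    simp only [hg]
    field_simp
    ring
  have hconst : ∀ t ∈ Ico (0:ℝ) r, F (t - τ t) - F t = F (-τ₀) := by
    intro t ht
    have key : ∀ x ∈ Icc (0:ℝ) t, F (x - τ x) - F x = F (0 - τ 0) - F 0 := by
      apply constant_of_has_deriv_right_zero
      · intro x hx
        have hx' : x ∈ Ico (0:ℝ) r := ⟨hx.1, lt_of_le_of_lt hx.2 ht.2⟩
        exact ((hhderiv x hx').continuousAt).continuousWithinAt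
      · intro x hx
        have hx' : x ∈ Ico (0:ℝ) r := ⟨hx.1, lt_of_lt_of_le hx.2 (le_of_lt ht.2)⟩
        exact (hhderiv x hx').hasDerivWithinAt
    have := key t ⟨ht.1, le_refl t⟩
    rw [hτ0, hF0, zero_sub] at this
    linarith
  constructor
  · intro hτ₀pos t ht
    by_contra hle
    push_neg at hle
    have hτt : τ t = 0 := le_antisymm hle (hτnonneg t ht)
    have h := hconst t ht
    rw [hτt, sub_zero, sub_self] at h
    have : F (-τ₀) < F 0 := hFlt _ _ (by linarith) hr (by linarith)
    rw [hF0] at this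
    linarith
  · intro hτ₀0 t ht
    have hpos : τ t = 0 := by
      by_contra hne
      have hpos : 0 < τ t := lt_of_le_of_ne (hτnonneg t ht) (Ne.symm hne)
      have h := hconst t ht
      rw [hτ₀0, neg_zero, hF0] at h
      have : F (t - τ t) < F t := hFlt _ _ (by linarith [ht.2]) ht.2 (by linarith)
      linarith
    exact hpos
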